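/- For d ∈ {1,...,9}, the function f_d : [1/(d+1), 1/d] → ℝ defined by f_d(x) = d(α_d − 1)x + 1 + ((9d−1)/9)·x·(ln x + ln d), with α_d = (9 + 10·ln 10 + 9(d+1)·ln(1 − 1/(d+1)))/(81d), attains its minimum at x₀ = (1/d)·10^{−10/(9(9d−1))}·(1 − 1/(d+1))^{−(d+1)/(9d−1)}, and the minimum value equals 1 − ((9d−1)/(9d))·10^{−10/(9(9d−1))}·(1 − 1/(d+1))^{−(d+1)/(9d−1)}. -/

import Mathlib

noncomputable def alpha (d : ℕ) : ℝ :=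
  (9 + 10 * Real.log 10 + 9 * ((d : ℝ) + 1) * Real.log (1 - 1 / ((d : ℝ) + 1))) / (81 * d)

noncomputable def f (d : ℕ) (x : ℝ) : ℝ :=
  (d : ℝ) * (alpha d - 1) * x + 1 + ((9 * (d : ℝ) - 1) / 9) * x * (Real.log x + Real.log d)

lemma log10_gt_two : (2:ℝ) < Real.log 10 := by
  have h := Real.exp_one_lt_d9
  have h2 : Real.exp 2 < 10 := by
    have he : Real.exp 2 = Real.exp 1 * Real.exp 1 := by
      rw [← Real.exp_add]; norm_num
    nlinarith [Real.exp_pos 1]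
  calc (2:ℝ) = Real.log (Real.exp 2) := (Real.log_exp 2).symm
    _ < Real.log 10 := Real.log_lt_log (Real.exp_pos 2) h2

lemma log10_lt : Real.log 10 < 4.5 := by
  have h := Real.exp_one_gt_d9
  have h4 : (10:ℝ) < Real.exp 4 := by
    have he : Real.exp 4 = Real.exp 1 * Real.exp 1 * Real.exp 1 * Real.exp 1 := by
      rw [← Real.exp_add, ← Real.exp_add, ← Real.exp_add]; norm_num
    have h27 : (2.7:ℝ) < Real.exp 1 := by linarith
    have hsq : (7.29:ℝ) < Real.exp 1 * Real.exp 1 := by nlinarith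
    nlinarith [hsq]
  have h45 : Real.exp 4 < Real.exp 4.5 := Real.exp_lt_exp.mpr (by norm_num)
  calc Real.log 10 < Real.log (Real.exp 4.5) :=
        Real.log_lt_log (by norm_num) (by linarith)
    _ = 4.5 := Real.log_exp _

lemma stat_aux (D L10 Lr : ℝ) (hD : D ≠ 0) (h9 : 9*D - 1 ≠ 0) :
    D * ((9 + 10 * L10 + 9 * (D + 1) * Lr) / (81 * D) - 1)
      = -((9*D - 1)/9) * (1 + (-(10:ℝ)/(9*(9*D-1)) * L10 + -(D+1)/(9*D-1) * Lr)) := by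
  have h9' : D*9 - 1 ≠ 0 := by rwa [mul_comm]
  field_simp
  ring

set_option maxHeartbeats 1000000 in
theorem f_min (d : ℕ) (hd : d ∈ Finset.Icc 1 9) :
    let x₀ : ℝ := (1 / (d : ℝ)) * (10 : ℝ) ^ (-(10 : ℝ) / (9 * (9 * (d : ℝ) - 1))) *
      (1 - 1 / ((d : ℝ) + 1)) ^ (-((d : ℝ) + 1) / (9 * (d : ℝ) - 1))
    x₀ ∈ Set.Icc (1 / ((d : ℝ) + 1)) (1 / (d : ℝ)) ∧
    (∀ x ∈ Set.Icc (1 / ((d : ℝ) + 1)) (1 / (d : ℝ)), f d x₀ ≤ f d x) ∧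
    f d x₀ = 1 - ((9 * (d : ℝ) - 1) / (9 * d)) * (10 : ℝ) ^ (-(10 : ℝ) / (9 * (9 * (d : ℝ) - 1))) *
      (1 - 1 / ((d : ℝ) + 1)) ^ (-((d : ℝ) + 1) / (9 * (d : ℝ) - 1)) := by
  intro x₀
  obtain ⟨hd1, hd9⟩ := Finset.mem_Icc.mp hd
  have hD1 : (1:ℝ) ≤ (d:ℝ) := by exact_mod_cast hd1
  have hD9 : (d:ℝ) ≤ 9 := by exact_mod_cast hd9
  set D : ℝ := (d : ℝ) with hDdef
  have hD0 : (0:ℝ) < D := by linarith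
  have hD1' : (0:ℝ) < D + 1 := by linarith
  have h9 : (0:ℝ) < 9 * D - 1 := by linarith
  have hr : (1 : ℝ) - 1/(D+1) = D/(D+1) := by field_simp; ring
  set r : ℝ := D/(D+1) with hrdef
  have hr0 : 0 < r := div_pos hD0 hD1'
  set a : ℝ := -(10:ℝ)/(9*(9*D-1)) with hadef
  set b : ℝ := -(D+1)/(9*D-1) with hbdef
  set A : ℝ := (10:ℝ) ^ a with hAdef
  set B : ℝ := r ^ b with hBdef
  have hA0 : 0 < A := Real.rpow_pos_of_pos (by norm_num) a
  have hB0 : 0 < B := Real.rpow_pos_of_pos hr0 b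
  have hlogA : Real.log A = a * Real.log 10 := Real.log_rpow (by norm_num) a
  have hlogB : Real.log B = b * Real.log r := Real.log_rpow hr0 b
  have hx₀ : x₀ = 1/D * A * B := by
    show (1 / D) * (10 : ℝ) ^ (-(10 : ℝ) / (9 * (9 * D - 1))) *
      (1 - 1 / (D + 1)) ^ (-(D + 1) / (9 * D - 1)) = _
    rw [hr]
  have hx₀0 : 0 < x₀ := by rw [hx₀]; positivity
  clear_value x₀ B A b a
  have haneg : a < 0 := by
    rw [hadef]; exact div_neg_of_neg_of_pos (by norm_num) (by linarith)
  have hbneg : b < 0 := by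
    rw [hbdef]; exact div_neg_of_neg_of_pos (by linarith) h9
  -- log estimates for r
  have hlr1 : Real.log r ≤ -1/(D+1) := by
    have h := Real.log_le_sub_one_of_pos hr0
    have he : r - 1 = -1/(D+1) := by rw [hrdef]; field_simp; ring
    linarith
  have hlr2 : -Real.log r ≤ 1/D := by
    have h := Real.log_le_sub_one_of_pos (x := r⁻¹) (by positivity)
    rw [Real.log_inv] at h
    have he : r⁻¹ - 1 = 1/D := by rw [hrdef]; field_simp; ring
    linarith
  have hlog10pos : (0:ℝ) < Real.log 10 := by linarith [log10_gt_two]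
  -- membership: upper bound
  have hmemU : x₀ ≤ 1/D := by
    rw [hx₀]
    have hAB : A * B ≤ 1 := by
      have hlog : Real.log (A*B) ≤ Real.log 1 := by
        rw [Real.log_mul (ne_of_gt hA0) (ne_of_gt hB0), Real.log_one, hlogA, hlogB]
        have h1 : a * Real.log 10 ≤ a * 2 :=
          mul_le_mul_of_nonpos_left (le_of_lt log10_gt_two) (le_of_lt haneg)
        have h2 : b * Real.log r ≤ (D+1)/(D*(9*D-1)) := by
          have e1 : b * Real.log r = ((D+1)/(9*D-1)) * (-Real.log r) := by
            rw [hbdef]; ring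
          rw [e1]
          have : ((D+1)/(9*D-1)) * (-Real.log r) ≤ ((D+1)/(9*D-1)) * (1/D) :=
            mul_le_mul_of_nonneg_left hlr2 (by positivity)
          calc ((D+1)/(9*D-1)) * (-Real.log r) ≤ ((D+1)/(9*D-1)) * (1/D) := this
            _ = (D+1)/(D*(9*D-1)) := by rw [div_mul_div_comm, mul_one, mul_comm (9*D-1) D]
        have ha2 : a * 2 = -20/(9*(9*D-1)) := by rw [hadef]; ring
        have h3 : (D+1)/(D*(9*D-1)) ≤ 20/(9*(9*D-1)) := by
          rw [div_le_div_iff₀ (by positivity) (by positivity)]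
          nlinarith
        have hneg : (-20:ℝ)/(9*(9*D-1)) = -(20/(9*(9*D-1))) := by ring
        linarith
      have := (Real.log_le_log_iff (mul_pos hA0 hB0) (by norm_num)).mp hlog
      linarith
    calc 1/D * A * B = 1/D * (A*B) := by ring
      _ ≤ 1/D * 1 := mul_le_mul_of_nonneg_left hAB (by positivity)
      _ = 1/D := by ring
  -- membership: lower bound
  have hmemL : 1/(D+1) ≤ x₀ := by
    rw [hx₀]
    have hAB : r ≤ A * B := by
      have hlog : Real.log r ≤ Real.log (A*B) := by
        rw [Real.log_mul (ne_of_gt hA0) (ne_of_gt hB0), hlogA, hlogB]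
        have h1 : a * 4.5 ≤ a * Real.log 10 :=
          mul_le_mul_of_nonpos_left (le_of_lt log10_lt) (le_of_lt haneg)
        have h1b : 0 < 1 - b := by linarith
        have h3 : (1-b) * Real.log r ≤ (1-b) * (-1/(D+1)) :=
          mul_le_mul_of_nonneg_left hlr1 (le_of_lt h1b)
        have he3 : (1-b) * (-1/(D+1)) = -10*D/((9*D-1)*(D+1)) := by
          have h9' : D*9 - 1 ≠ 0 := by linarith
          rw [hbdef]; field_simp; ring
        have he4 : a * 4.5 = -45/(9*(9*D-1)) := by rw [hadef]; ring
        have h4 : -10*D/((9*D-1)*(D+1)) ≤ -45/(9*(9*D-1)) := by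
          rw [div_le_div_iff₀ (by positivity) (by positivity)]
          nlinarith
        have hexp : (1-b) * Real.log r = Real.log r - b * Real.log r := by ring
        linarith
      exact (Real.log_le_log_iff hr0 (mul_pos hA0 hB0)).mp hlog
    calc 1/(D+1) = 1/D * r := by rw [hrdef]; field_simp
      _ ≤ 1/D * (A*B) := mul_le_mul_of_nonneg_left hAB (by positivity)
      _ = 1/D * A * B := by ring
  -- stationarity
  have hT : Real.log (x₀ * D) = a * Real.log 10 + b * Real.log r := by
    rw [hx₀, show 1/D*A*B*D = A*B*(D/D) by ring, div_self (ne_of_gt hD0), mul_one,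
      Real.log_mul (ne_of_gt hA0) (ne_of_gt hB0), hlogA, hlogB]
  have halpha : alpha d = (9 + 10 * Real.log 10 + 9 * (D + 1) * Real.log r) / (81 * D) := by
    simp only [alpha, ← hDdef, hr]
  have hkey : D * (alpha d - 1) = -((9*D-1)/9) * (1 + Real.log (x₀ * D)) := by
    rw [halpha, hT, hadef, hbdef]
    exact stat_aux D (Real.log 10) (Real.log r) (ne_of_gt hD0) (ne_of_gt h9)
  -- value at x₀
  have hfx₀ : f d x₀ = 1 - ((9*D-1)/9) * x₀ := by
    simp only [f, ← hDdef]
    rw [show Real.log x₀ + Real.log D = Real.log (x₀ * D) from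
      (Real.log_mul (ne_of_gt hx₀0) (ne_of_gt hD0)).symm, hkey]
    ring
  refine ⟨⟨hmemL, hmemU⟩, ?_, ?_⟩
  · intro x hx
    obtain ⟨hx1, hx2⟩ := hx
    have hx0 : 0 < x := lt_of_lt_of_le (by positivity) hx1
    have hfx : f d x = D * (alpha d - 1) * x + 1 + ((9*D-1)/9) * x * Real.log (x * D) := by
      simp only [f, ← hDdef]
      rw [Real.log_mul (ne_of_gt hx0) (ne_of_gt hD0)]
    have hlxx : Real.log (x * D) = Real.log (x/x₀) + Real.log (x₀ * D) := by
      rw [Real.log_mul (ne_of_gt hx0) (ne_of_gt hD0),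
        Real.log_mul (ne_of_gt hx₀0) (ne_of_gt hD0),
        Real.log_div (ne_of_gt hx0) (ne_of_gt hx₀0)]
      ring
    have hdiff : f d x - f d x₀ = ((9*D-1)/9) * (x * Real.log (x/x₀) - x + x₀) := by
      rw [hfx, hfx₀, hkey, hlxx]
      ring
    have hE : 0 ≤ x * Real.log (x/x₀) - x + x₀ := by
      have h := Real.log_le_sub_one_of_pos (x := x₀/x) (div_pos hx₀0 hx0)
      have hlog : Real.log (x₀/x) = -Real.log (x/x₀) := by
        rw [Real.log_div (ne_of_gt hx₀0) (ne_of_gt hx0),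
          Real.log_div (ne_of_gt hx0) (ne_of_gt hx₀0)]
        ring
      rw [hlog] at h
      have h2 : x * (-Real.log (x/x₀)) ≤ x * (x₀/x - 1) :=
        mul_le_mul_of_nonneg_left h (le_of_lt hx0)
      have he : x * (x₀/x - 1) = x₀ - x := by field_simp
      have h3 : x * (-Real.log (x/x₀)) = -(x * Real.log (x/x₀)) := by ring
      linarith
    linarith [mul_nonneg (by linarith : (0:ℝ) ≤ (9*D-1)/9) hE, hdiff]
  · rw [hr, ← hBdef, hfx₀, hx₀]
    have hq : (9*D-1)/9 * (1/D * A * B) = (9*D-1)/(9*D) * A * B := by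
      field_simp
    linarith
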